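/- arXiv:math/0511054 — 3 statements merged into one kernel-verified Lean document; each statement's English description precedes it below -/
import Mathlib

section
/- For ℓ ≥ 1 a natural number and any unit vector (τ, ξ) ∈ ℝ² (τ² + ξ² = 1), the Lebesgue measure of the set {v ∈ [-M, M] : |τ + v^ℓ ξ| ≤ δ} is bounded by C·δ^{1/ℓ} for a constant C depending only on ℓ and M, uniformly in (τ, ξ) and 0 < δ ≤ 1. -/
open MeasureTheory

private lemma abs_sub_pow_le_aux (ℓ : ℕ) (hℓ : ℓ ≠ 0) (v w : ℝ) (hv : 0 ≤ v) (hw : 0 ≤ w) :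
    |v - w| ^ ℓ ≤ |v ^ ℓ - w ^ ℓ| := by
  wlog h : v ≤ w generalizing v w
  · rw [abs_sub_comm, abs_sub_comm (v ^ ℓ)]
    exact this w v hw hv (le_of_not_ge h)
  have h1 : v ^ ℓ ≤ w ^ ℓ := pow_le_pow_left₀ hv h ℓ
  rw [abs_sub_comm, abs_of_nonneg (sub_nonneg.2 h), abs_sub_comm,
    abs_of_nonneg (sub_nonneg.2 h1)]
  have h2 := pow_add_pow_le (sub_nonneg.2 h : (0:ℝ) ≤ w - v) hv hℓ
  have h3 : (w - v + v) = w := by ring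
  rw [h3] at h2
  linarith

theorem nondegeneracy_power_flux (ℓ : ℕ) (hℓ : 1 ≤ ℓ) (M : ℝ) (hM : 0 < M) :
    ∃ C : ℝ, 0 < C ∧ ∀ τ ξ δ : ℝ, τ ^ 2 + ξ ^ 2 = 1 → 0 < δ → δ ≤ 1 →
      volume {v : ℝ | v ∈ Set.Icc (-M) M ∧ |τ + v ^ ℓ * ξ| ≤ δ}
        ≤ ENNReal.ofReal (C * δ ^ (1 / (ℓ : ℝ))) := by
  have hℓ0 : (ℓ : ℝ) ≠ 0 := by positivity
  have hℓn0 : ℓ ≠ 0 := by omega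
  set B : ℝ := 2 * max 1 (M ^ ℓ) with hBdef
  have hB2 : 2 ≤ B := by
    have : (1:ℝ) ≤ max 1 (M ^ ℓ) := le_max_left _ _
    nlinarith
  have hB0 : 0 < B := by linarith
  have hMB : M ^ ℓ ≤ B / 2 := by
    have : M ^ ℓ ≤ max 1 (M ^ ℓ) := le_max_right _ _
    linarith
  refine ⟨8 * M + 4 * (2 * B) ^ (1 / (ℓ:ℝ)), by positivity, ?_⟩
  intro τ ξ δ hτξ hδ hδ1
  have hδp : 0 < δ ^ (1 / (ℓ:ℝ)) := Real.rpow_pos_of_pos hδ _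
  have hδℓ : δ ≤ δ ^ (1 / (ℓ:ℝ)) := by
    have h1 : (1 / (ℓ:ℝ)) ≤ 1 := by
      rw [div_le_one (by positivity)]
      exact_mod_cast hℓ
    calc δ = δ ^ (1:ℝ) := (Real.rpow_one δ).symm
      _ ≤ δ ^ (1 / (ℓ:ℝ)) := Real.rpow_le_rpow_of_exponent_ge hδ hδ1 h1
  set S : Set ℝ := {v : ℝ | v ∈ Set.Icc (-M) M ∧ |τ + v ^ ℓ * ξ| ≤ δ} with hSdef
  by_cases hξ : |ξ| < 1 / B
  · -- small ξ case
    have hxbound : ∀ v ∈ S, |v ^ ℓ * ξ| ≤ 1 / 2 := by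
      intro v hv
      obtain ⟨⟨hv1, hv2⟩, _⟩ := hv
      have hav : |v| ≤ M := abs_le.2 ⟨hv1, hv2⟩
      have h1 : |v ^ ℓ * ξ| = |v| ^ ℓ * |ξ| := by rw [abs_mul, abs_pow]
      have h2 : |v| ^ ℓ ≤ M ^ ℓ := pow_le_pow_left₀ (abs_nonneg v) hav ℓ
      have h3 : |v| ^ ℓ * |ξ| ≤ M ^ ℓ * (1 / B) :=
        mul_le_mul h2 hξ.le (abs_nonneg ξ) (by positivity)
      rw [h1]
      calc |v| ^ ℓ * |ξ| ≤ M ^ ℓ * (1 / B) := h3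
        _ ≤ (B / 2) * (1 / B) := by
            apply mul_le_mul_of_nonneg_right hMB (by positivity)
        _ = 1 / 2 := by field_simp
    have hξ2 : ξ ^ 2 ≤ 1 / 4 := by
      have : |ξ| ≤ 1 / 2 := by
        calc |ξ| ≤ 1 / B := hξ.le
          _ ≤ 1 / 2 := by
            apply div_le_div_of_nonneg_left (by norm_num) (by norm_num) hB2
      nlinarith [abs_nonneg ξ, sq_abs ξ]
    by_cases hδs : δ < 1 / 4
    · have hempty : S = ∅ := by
        ext v
        simp only [Set.mem_empty_iff_false, iff_false]
        intro hv
        have h1 := hxbound v hv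
        obtain ⟨-, habs⟩ := hv
        have h2 : |τ| ≤ |τ + v ^ ℓ * ξ| + |v ^ ℓ * ξ| := by
          calc |τ| = |(τ + v ^ ℓ * ξ) + (-(v ^ ℓ * ξ))| := by ring_nf
            _ ≤ |τ + v ^ ℓ * ξ| + |(-(v ^ ℓ * ξ))| := abs_add_le _ _
            _ = |τ + v ^ ℓ * ξ| + |v ^ ℓ * ξ| := by rw [abs_neg]
        have h3 : |τ| < 3 / 4 := by linarith
        have h4 : τ ^ 2 < 9 / 16 := by nlinarith [abs_nonneg τ, sq_abs τ]
        nlinarith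
      rw [hempty]
      simp
    · push_neg at hδs
      calc volume S ≤ volume (Set.Icc (-M) M) := by
            apply measure_mono
            intro v hv; exact hv.1
        _ = ENNReal.ofReal (2 * M) := by rw [Real.volume_Icc]; ring_nf
        _ ≤ ENNReal.ofReal ((8 * M + 4 * (2 * B) ^ (1 / (ℓ:ℝ))) * δ ^ (1 / (ℓ:ℝ))) := by
            apply ENNReal.ofReal_le_ofReal
            have h8 : 2 * M ≤ 8 * M * δ ^ (1 / (ℓ:ℝ)) := by nlinarith
            have hpos : 0 ≤ 4 * (2 * B) ^ (1 / (ℓ:ℝ)) * δ ^ (1 / (ℓ:ℝ)) := by positivity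
            nlinarith
  · -- large ξ case
    push_neg at hξ
    have hξ0 : 0 < |ξ| := lt_of_lt_of_le (by positivity) hξ
    set K : ℝ := (2 * B * δ) ^ (1 / (ℓ:ℝ)) with hKdef
    have hK0 : 0 ≤ K := Real.rpow_nonneg (by positivity) _
    have hKpow : K ^ ℓ = 2 * B * δ := by
      rw [hKdef, ← Real.rpow_natCast ((2 * B * δ) ^ (1 / (ℓ:ℝ))) ℓ,
        ← Real.rpow_mul (by positivity), one_div, inv_mul_cancel₀ hℓ0, Real.rpow_one]
    -- key: same-sign points in S are within K of each other
    have hdiff : ∀ v ∈ S, ∀ w ∈ S, |v ^ ℓ - w ^ ℓ| ≤ 2 * B * δ := by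
      intro v hv w hw
      have h1 : |(τ + v ^ ℓ * ξ) - (τ + w ^ ℓ * ξ)| ≤ 2 * δ := by
        calc |(τ + v ^ ℓ * ξ) - (τ + w ^ ℓ * ξ)|
            ≤ |τ + v ^ ℓ * ξ| + |τ + w ^ ℓ * ξ| := abs_sub _ _
          _ ≤ 2 * δ := by linarith [hv.2, hw.2]
      have h2 : (τ + v ^ ℓ * ξ) - (τ + w ^ ℓ * ξ) = (v ^ ℓ - w ^ ℓ) * ξ := by ring
      rw [h2, abs_mul] at h1
      have h3 : |v ^ ℓ - w ^ ℓ| * (1 / B) ≤ |v ^ ℓ - w ^ ℓ| * |ξ| :=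
        mul_le_mul_of_nonneg_left hξ (abs_nonneg _)
      have h4 : |v ^ ℓ - w ^ ℓ| * (1 / B) ≤ 2 * δ := le_trans h3 h1
      calc |v ^ ℓ - w ^ ℓ| = (|v ^ ℓ - w ^ ℓ| * (1 / B)) * B := by field_simp
        _ ≤ (2 * δ) * B := mul_le_mul_of_nonneg_right h4 hB0.le
        _ = 2 * B * δ := by ring
    have hclose : ∀ v ∈ S, ∀ w ∈ S, (0 ≤ v ∧ 0 ≤ w) ∨ (v ≤ 0 ∧ w ≤ 0) → |v - w| ≤ K := by
      intro v hv w hw hsign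
      have hpow : |v - w| ^ ℓ ≤ 2 * B * δ := by
        rcases hsign with ⟨hv0, hw0⟩ | ⟨hv0, hw0⟩
        · exact le_trans (abs_sub_pow_le_aux ℓ hℓn0 v w hv0 hw0) (hdiff v hv w hw)
        · have h1 := abs_sub_pow_le_aux ℓ hℓn0 (-v) (-w) (by linarith) (by linarith)
          have h2 : |(-v) - (-w)| = |v - w| := by rw [show (-v) - (-w) = -(v - w) by ring, abs_neg]
          have h3 : |(-v) ^ ℓ - (-w) ^ ℓ| = |v ^ ℓ - w ^ ℓ| := by
            rcases Nat.even_or_odd ℓ with he | ho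
            · rw [he.neg_pow, he.neg_pow]
            · rw [ho.neg_pow, ho.neg_pow,
                show -v ^ ℓ - -w ^ ℓ = -(v ^ ℓ - w ^ ℓ) by ring, abs_neg]
          rw [h2, h3] at h1
          exact le_trans h1 (hdiff v hv w hw)
      rw [← hKpow] at hpow
      exact le_of_pow_le_pow_left₀ hℓn0 hK0 hpow
    -- bound volume of each sign half
    have hhalf : ∀ T : Set ℝ, T ⊆ S →
        (∀ v ∈ T, ∀ w ∈ T, |v - w| ≤ K) → volume T ≤ ENNReal.ofReal (2 * K) := by
      intro T hTS hTd
      rcases T.eq_empty_or_nonempty with rfl | ⟨v₀, hv₀⟩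
      · simp
      · calc volume T ≤ volume (Set.Icc (v₀ - K) (v₀ + K)) := by
              apply measure_mono
              intro w hw
              have := hTd w hw v₀ hv₀
              rw [abs_le] at this
              constructor <;> linarith [this.1, this.2]
          _ = ENNReal.ofReal (2 * K) := by rw [Real.volume_Icc]; ring_nf
    have hSsplit : S ⊆ (S ∩ Set.Ici 0) ∪ (S ∩ Set.Iic 0) := by
      intro v hv
      rcases le_total 0 v with h | h
      · exact Or.inl ⟨hv, h⟩
      · exact Or.inr ⟨hv, h⟩
    have hvol1 : volume (S ∩ Set.Ici 0) ≤ ENNReal.ofReal (2 * K) := by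
      apply hhalf _ Set.inter_subset_left
      intro v hv w hw
      exact hclose v hv.1 w hw.1 (Or.inl ⟨hv.2, hw.2⟩)
    have hvol2 : volume (S ∩ Set.Iic 0) ≤ ENNReal.ofReal (2 * K) := by
      apply hhalf _ Set.inter_subset_left
      intro v hv w hw
      exact hclose v hv.1 w hw.1 (Or.inr ⟨hv.2, hw.2⟩)
    calc volume S ≤ volume ((S ∩ Set.Ici 0) ∪ (S ∩ Set.Iic 0)) := measure_mono hSsplit
      _ ≤ volume (S ∩ Set.Ici 0) + volume (S ∩ Set.Iic 0) := measure_union_le _ _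
      _ ≤ ENNReal.ofReal (2 * K) + ENNReal.ofReal (2 * K) := add_le_add hvol1 hvol2
      _ = ENNReal.ofReal (4 * K) := by
          rw [← ENNReal.ofReal_add (by positivity) (by positivity)]; ring_nf
      _ ≤ ENNReal.ofReal ((8 * M + 4 * (2 * B) ^ (1 / (ℓ:ℝ))) * δ ^ (1 / (ℓ:ℝ))) := by
          apply ENNReal.ofReal_le_ofReal
          have hKsplit : K = (2 * B) ^ (1 / (ℓ:ℝ)) * δ ^ (1 / (ℓ:ℝ)) := by
            rw [hKdef, Real.mul_rpow (by positivity) hδ.le]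
          rw [hKsplit]
          nlinarith [hδp.le, hM.le, mul_pos hM hδp]
end

section
/- Let T be a map with T(0) = 0 that is Lipschitz on a normed space X with constant L, and maps a subspace Y₁ ⊆ X boundedly into a normed space Y₂ with ‖T y‖_{Y₂} ≤ B ‖y‖_{Y₁}. Then the K-functionals satisfy K(Tx, t; X, Y₂) ≤ L · K(x, t B / L; X, Y₁) for all x ∈ Y₁ + X and t > 0, where K(x, t; X, Y) := inf{‖x₀‖_X + t ‖x₁‖_Y : x = x₀ + x₁}. -/
open Set

variable {X : Type*} [NormedAddCommGroup X]

/-- The Peetre K-functional of `x` at parameter `t`, relative to the ambient space `X`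
and a subset `Y ⊆ X` endowed with a norm functional `nY`. -/
noncomputable def Kfun (Y : Set X) (nY : X → ℝ) (x : X) (t : ℝ) : ℝ :=
  sInf {r : ℝ | ∃ x₀ x₁ : X, x = x₀ + x₁ ∧ x₁ ∈ Y ∧ r = ‖x₀‖ + t * nY x₁}

/-- Nonlinear interpolation lemma of J.-L. Lions: if `T` is Lipschitz on `X` with
constant `L`, `T 0 = 0`, and maps `Y₁` into `Y₂` with bound `B`, then
`K(Tx, t; X, Y₂) ≤ L · K(x, tB/L; X, Y₁)`. -/
theorem nonlinear_interpolation_K (Y₁ Y₂ : Set X) (nY₁ nY₂ : X → ℝ)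
    (h0₁ : (0 : X) ∈ Y₁) (h0₂ : (0 : X) ∈ Y₂)
    (hn₁ : ∀ x, 0 ≤ nY₁ x) (hn₂ : ∀ x, 0 ≤ nY₂ x)
    (T : X → X) (hT0 : T 0 = 0)
    (L B : ℝ) (hL : 0 < L) (hB : 0 < B)
    (hLip : ∀ x x' : X, ‖T x - T x'‖ ≤ L * ‖x - x'‖)
    (hTY : ∀ y ∈ Y₁, T y ∈ Y₂ ∧ nY₂ (T y) ≤ B * nY₁ y) :
    ∀ (x : X) (t : ℝ), 0 < t →
      Kfun Y₂ nY₂ (T x) t ≤ L * Kfun Y₁ nY₁ x (t * B / L) := by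
  intro x t ht
  rw [mul_comm, ← div_le_iff₀ hL]
  apply le_csInf
  · exact ⟨‖x‖ + (t * B / L) * nY₁ 0, x, 0, by rw [add_zero], h0₁, rfl⟩
  · rintro r ⟨x₀, x₁, hx, hx₁, rfl⟩
    rw [div_le_iff₀ hL]
    have hbdd : BddBelow {r : ℝ | ∃ x₀ x₁ : X, T x = x₀ + x₁ ∧ x₁ ∈ Y₂ ∧ r = ‖x₀‖ + t * nY₂ x₁} := by
      refine ⟨0, ?_⟩
      rintro r ⟨a, b, _, _, rfl⟩
      exact add_nonneg (norm_nonneg a) (mul_nonneg ht.le (hn₂ b))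
    have hmem : (‖T x - T x₁‖ + t * nY₂ (T x₁)) ∈
        {r : ℝ | ∃ x₀ x₁ : X, T x = x₀ + x₁ ∧ x₁ ∈ Y₂ ∧ r = ‖x₀‖ + t * nY₂ x₁} :=
      ⟨T x - T x₁, T x₁, by abel, (hTY x₁ hx₁).1, rfl⟩
    calc Kfun Y₂ nY₂ (T x) t ≤ ‖T x - T x₁‖ + t * nY₂ (T x₁) := csInf_le hbdd hmem
      _ ≤ L * ‖x₀‖ + t * (B * nY₁ x₁) := by
          gcongr
          · calc ‖T x - T x₁‖ ≤ L * ‖x - x₁‖ := hLip x x₁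
              _ = L * ‖x₀‖ := by rw [hx]; ring_nf; rw [add_sub_cancel_right]
          · exact (hTY x₁ hx₁).2
      _ = (‖x₀‖ + t * B / L * nY₁ x₁) * L := by field_simp
end

section
/- Let ℓ ≠ m be natural numbers ≥ 1 and M > 0. Then there exists C and α = min(1/ℓ, 1/m) such that for every (τ, ξ₁, ξ₂) with τ² + ξ₁² + ξ₂² = 1 and every δ ∈ (0,1], the measure of {v ∈ [-M,M] : |τ + v^ℓ ξ₁ + v^m ξ₂| ≤ δ} is at most C δ^α. -/
open MeasureTheory Polynomial ENNReal

noncomputable def Complex.abs : AbsoluteValue ℂ ℝ := NormedField.toAbsoluteValue ℂ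

lemma Complex.abs_ofReal (x : ℝ) : Complex.abs (x : ℂ) = |x| := Complex.norm_real x

lemma Complex.abs_re_le_abs (z : ℂ) : |z.re| ≤ Complex.abs z := Complex.abs_re_le_norm z

section Aux
variable (ℓ m : ℕ) (τ ξ₁ ξ₂ : ℝ)

lemma coeffs_poly (hℓ : 1 ≤ ℓ) (hm : 1 ≤ m) (hne : ℓ ≠ m) :
    (C τ + C ξ₁ * X ^ ℓ + C ξ₂ * X ^ m : ℝ[X]).coeff 0 = τ ∧
    (C τ + C ξ₁ * X ^ ℓ + C ξ₂ * X ^ m : ℝ[X]).coeff ℓ = ξ₁ ∧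
    (C τ + C ξ₁ * X ^ ℓ + C ξ₂ * X ^ m : ℝ[X]).coeff m = ξ₂ := by
  have h1 : ℓ ≠ 0 := by omega
  have h2 : m ≠ 0 := by omega
  refine ⟨?_, ?_, ?_⟩ <;>
    simp [coeff_add, coeff_C, coeff_C_mul, coeff_X_pow, h1, h2, hne, Ne.symm hne, h1.symm, h2.symm]

lemma natDegree_poly_le :
    (C τ + C ξ₁ * X ^ ℓ + C ξ₂ * X ^ m : ℝ[X]).natDegree ≤ max ℓ m := by
  refine (natDegree_add_le _ _).trans ?_
  have h1 : (C τ + C ξ₁ * X ^ ℓ : ℝ[X]).natDegree ≤ ℓ := by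
    refine (natDegree_add_le _ _).trans ?_
    simp [natDegree_C]
    exact (natDegree_C_mul_le _ _).trans (by simp)
  have h2 : (C ξ₂ * X ^ m : ℝ[X]).natDegree ≤ m :=
    (natDegree_C_mul_le _ _).trans (by simp)
  exact max_le (h1.trans (le_max_left _ _)) (h2.trans (le_max_right _ _))

lemma eval_poly (v : ℝ) :
    (C τ + C ξ₁ * X ^ ℓ + C ξ₂ * X ^ m : ℝ[X]).eval v = τ + v ^ ℓ * ξ₁ + v ^ m * ξ₂ := by
  simp; ring

end Aux

lemma exists_eval_lb (ℓ m : ℕ) (hℓ : 1 ≤ ℓ) (hm : 1 ≤ m) (hne : ℓ ≠ m)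
    (M : ℝ) (hM : 0 < M) :
    ∃ c₁ : ℝ, 0 < c₁ ∧ ∀ τ ξ₁ ξ₂ : ℝ, τ ^ 2 + ξ₁ ^ 2 + ξ₂ ^ 2 = 1 →
      ∃ v₀ ∈ Set.Icc (-M) M, c₁ ≤ |τ + v₀ ^ ℓ * ξ₁ + v₀ ^ m * ξ₂| := by
  set N : ℕ := max ℓ m + 1 with hN
  have hN0 : (0:ℝ) < N := by positivity
  set x : Fin N → ℝ := fun j => M * (j + 1) / N with hx
  have hxmem : ∀ j, x j ∈ Set.Icc (-M) M := by
    intro j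
    have hj : (0:ℝ) < (j:ℝ) + 1 := by positivity
    have hj2 : (j:ℝ) + 1 ≤ N := by
      have := j.isLt
      have : ((j:ℕ):ℝ) + 1 ≤ (N:ℝ) := by exact_mod_cast this
      simpa using this
    constructor
    · have : 0 ≤ x j := by
        apply div_nonneg (by positivity) (le_of_lt hN0)
      linarith
    · rw [hx]
      rw [div_le_iff₀ hN0]
      nlinarith
  have hxinj : Function.Injective x := by
    intro a b hab
    simp only [hx] at hab
    rw [div_eq_div_iff (ne_of_gt hN0) (ne_of_gt hN0)] at hab
    have h2 := mul_right_cancel₀ (ne_of_gt hN0) hab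
    have h3 := mul_left_cancel₀ (ne_of_gt hM) h2
    have : ((a:ℕ):ℝ) = ((b:ℕ):ℝ) := by linarith
    exact Fin.ext (by exact_mod_cast this)
  -- the function F
  set F : ℝ × ℝ × ℝ → ℝ := fun p =>
    ∑ j : Fin N, (p.1 + (x j) ^ ℓ * p.2.1 + (x j) ^ m * p.2.2) ^ 2 with hF
  have hFcont : Continuous F := by fun_prop
  set S : Set (ℝ × ℝ × ℝ) := {p | p.1 ^ 2 + p.2.1 ^ 2 + p.2.2 ^ 2 = 1} with hS
  have hScompact : IsCompact S := by
    have hclosed : IsClosed S := by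
      have : S = (fun p : ℝ × ℝ × ℝ => p.1 ^ 2 + p.2.1 ^ 2 + p.2.2 ^ 2) ⁻¹' {1} := by
        ext p; simp [hS]
      rw [this]
      exact IsClosed.preimage (by fun_prop) isClosed_singleton
    refine IsCompact.of_isClosed_subset (isCompact_Icc (a := ((-1,-1,-1) : ℝ×ℝ×ℝ))
      (b := (1,1,1))) hclosed ?_
    intro p hp
    simp only [hS, Set.mem_setOf_eq] at hp
    simp only [Set.mem_Icc, Prod.le_def]
    refine ⟨⟨?_, ?_, ?_⟩, ?_, ?_, ?_⟩ <;>
      nlinarith [sq_nonneg p.1, sq_nonneg p.2.1, sq_nonneg p.2.2]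
  have hSne : S.Nonempty := ⟨(1,0,0), by simp [hS]⟩
  obtain ⟨p₀, hp₀S, hp₀min⟩ := hScompact.exists_isMinOn hSne hFcont.continuousOn
  have hFpos : 0 < F p₀ := by
    rcases lt_or_eq_of_le (Finset.sum_nonneg (fun j _ => sq_nonneg _) : 0 ≤ F p₀) with h | h
    · exact h
    · exfalso
      have hall : ∀ j : Fin N,
          (p₀.1 + (x j) ^ ℓ * p₀.2.1 + (x j) ^ m * p₀.2.2) ^ 2 = 0 := by
        intro j
        have := (Finset.sum_eq_zero_iff_of_nonneg (fun j _ => sq_nonneg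
          (p₀.1 + (x j) ^ ℓ * p₀.2.1 + (x j) ^ m * p₀.2.2))).mp h.symm
        exact this j (Finset.mem_univ j)
      set p : ℝ[X] := C p₀.1 + C p₀.2.1 * X ^ ℓ + C p₀.2.2 * X ^ m with hp
      have hpz : p = 0 := by
        apply eq_zero_of_natDegree_lt_card_of_eval_eq_zero p hxinj
        · intro j
          rw [eval_poly]
          have := hall j
          nlinarith [this]
        · calc p.natDegree ≤ max ℓ m := natDegree_poly_le ℓ m _ _ _
            _ < N := by omega
            _ = Fintype.card (Fin N) := by simp
      obtain ⟨h0, h1, h2⟩ := coeffs_poly ℓ m p₀.1 p₀.2.1 p₀.2.2 hℓ hm hne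
      rw [← hp, hpz] at h0 h1 h2
      simp at h0 h1 h2
      have := hp₀S
      simp [hS, ← h0, ← h1, ← h2] at this
  refine ⟨Real.sqrt (F p₀ / N), Real.sqrt_pos.mpr (by positivity), ?_⟩
  intro τ ξ₁ ξ₂ hsph
  have hmem : (τ, ξ₁, ξ₂) ∈ S := hsph
  have hge : F p₀ ≤ F (τ, ξ₁, ξ₂) := hp₀min hmem
  -- some term is at least F p₀ / N
  by_contra hcon
  push_neg at hcon
  have hlt : ∀ j : Fin N, (τ + (x j) ^ ℓ * ξ₁ + (x j) ^ m * ξ₂) ^ 2 < F p₀ / N := by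
    intro j
    have := hcon (x j) (hxmem j)
    have habs : |τ + (x j) ^ ℓ * ξ₁ + (x j) ^ m * ξ₂| < Real.sqrt (F p₀ / N) := this
    have := Real.sq_sqrt (le_of_lt (show (0:ℝ) < F p₀ / N by positivity))
    nlinarith [abs_nonneg (τ + (x j) ^ ℓ * ξ₁ + (x j) ^ m * ξ₂),
      sq_abs (τ + (x j) ^ ℓ * ξ₁ + (x j) ^ m * ξ₂)]
  have : F (τ, ξ₁, ξ₂) < N * (F p₀ / N) := by
    have := Finset.sum_lt_sum_of_nonempty (Finset.univ_nonempty) (fun j _ => hlt j)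
    simpa [hF, Finset.sum_const, Finset.card_univ, nsmul_eq_mul] using this
  rw [mul_div_cancel₀ _ (ne_of_gt hN0)] at this
  linarith

lemma arith_t_lt_theta (M t : ℝ) (hM : 0 < M) (ht0 : 0 < t) (ht : t < 1/2) :
    t < 4*M*t/(4*M*t+2*M) := by
  rw [lt_div_iff₀ (by positivity)]
  nlinarith [mul_pos hM ht0, mul_pos (mul_pos hM ht0) ht0]

lemma arith_ratio_le (M ρ s s₀ : ℝ) (hM : 0 < M) (hρ : 0 < ρ) (hs : ρ ≤ s)
    (h : s₀ ≤ s + 2*M) (hs₀ : 0 ≤ s₀) : (ρ/(ρ+2*M)) * s₀ ≤ s := by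
  have h1 : (ρ/(ρ+2*M)) * s₀ ≤ (ρ/(ρ+2*M)) * (s + 2*M) :=
    mul_le_mul_of_nonneg_left h (by positivity)
  have h2 : (ρ/(ρ+2*M)) * (s+2*M) ≤ s := by
    rw [div_mul_eq_mul_div, div_le_iff₀ (by positivity)]
    nlinarith
  linarith

set_option maxHeartbeats 2000000 in
theorem nondeg_aux (ℓ m : ℕ) (hℓ : 1 ≤ ℓ) (hm : 1 ≤ m) (hne : ℓ ≠ m)
    (M : ℝ) (hM : 0 < M)
    (c₁ : ℝ) (hc₁ : 0 < c₁)
    (hlb : ∀ τ ξ₁ ξ₂ : ℝ, τ ^ 2 + ξ₁ ^ 2 + ξ₂ ^ 2 = 1 →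
      ∃ v₀ ∈ Set.Icc (-M) M, c₁ ≤ |τ + v₀ ^ ℓ * ξ₁ + v₀ ^ m * ξ₂|) :
    ∃ C : ℝ, 0 < C ∧ ∀ τ ξ₁ ξ₂ δ : ℝ, τ ^ 2 + ξ₁ ^ 2 + ξ₂ ^ 2 = 1 → 0 < δ → δ ≤ 1 →
      volume {v : ℝ | v ∈ Set.Icc (-M) M ∧ |τ + v ^ ℓ * ξ₁ + v ^ m * ξ₂| ≤ δ}
        ≤ ENNReal.ofReal (C * δ ^ (min (1 / (ℓ : ℝ)) (1 / (m : ℝ)))) := by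
  set m' : ℕ := max ℓ m with hm'def
  have hm'1 : 1 ≤ m' := le_trans hℓ (le_max_left _ _)
  have hm'R : (1:ℝ) ≤ (m' : ℝ) := by exact_mod_cast hm'1
  set c₂ : ℝ := min (c₁ / 2 ^ m') 1 with hc₂def
  have hc₂ : 0 < c₂ := by positivity
  have hc₂le : c₂ ≤ c₁ / 2 ^ m' := min_le_left _ _
  have hc₂1 : c₂ ≤ 1 := min_le_right _ _
  have h2pow : (1:ℝ) ≤ 2 ^ m' := one_le_pow₀ (by norm_num)
  have hc₂c₁ : c₂ ≤ c₁ := hc₂le.trans (by rw [div_le_iff₀ (by positivity)]; nlinarith)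
  set Cc : ℝ := 8 * M * (m' + 1) * (1 / c₂) * (1 + 1 / c₁) with hCc
  refine ⟨Cc, by positivity, ?_⟩
  intro τ ξ₁ ξ₂ δ hsph hδ hδ1
  set α : ℝ := min (1 / (ℓ : ℝ)) (1 / (m : ℝ)) with hα
  have hℓR : (0:ℝ) < ℓ := by exact_mod_cast hℓ
  have hmR : (0:ℝ) < m := by exact_mod_cast hm
  have hαval : α = ((m' : ℝ))⁻¹ := by
    rw [hα, hm'def]
    rcases le_total ℓ m with h | h
    · rw [max_eq_right h, min_eq_right]
      · rw [one_div]
      · apply one_div_le_one_div_of_le hℓR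
        exact_mod_cast h
    · rw [max_eq_left h, min_eq_left]
      · rw [one_div]
      · apply one_div_le_one_div_of_le hmR
        exact_mod_cast h
  have hα0 : 0 < α := by rw [hαval]; positivity
  have hα1 : α ≤ 1 := by rw [hαval]; exact inv_le_one_of_one_le₀ hm'R
  have hδα : δ ≤ δ ^ α := by
    calc δ = δ ^ (1:ℝ) := (Real.rpow_one δ).symm
    _ ≤ δ ^ α := Real.rpow_le_rpow_of_exponent_ge hδ hδ1 hα1
  have hδα0 : 0 ≤ δ ^ α := Real.rpow_nonneg hδ.le α
  set E : Set ℝ := {v : ℝ | v ∈ Set.Icc (-M) M ∧ |τ + v ^ ℓ * ξ₁ + v ^ m * ξ₂| ≤ δ} with hE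
  have hEsub : E ⊆ Set.Icc (-M) M := fun v hv => hv.1
  by_cases hsmall : δ < c₂
  swap
  · push_neg at hsmall
    refine (measure_mono hEsub).trans ?_
    rw [Real.volume_Icc]
    apply ENNReal.ofReal_le_ofReal
    have h1 : c₂ ≤ δ ^ α := hsmall.trans hδα
    have h2 : Cc * c₂ ≤ Cc * δ ^ α := by
      apply mul_le_mul_of_nonneg_left h1 (by positivity)
    have h3 : Cc * c₂ = 8 * M * (m' + 1) * (1 + 1 / c₁) := by
      rw [hCc]; field_simp
    have h4 : (2:ℝ) ≤ ((m':ℝ) + 1) * (1 + 1 / c₁) := by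
      have h5 : (0:ℝ) < 1/c₁ := by positivity
      nlinarith
    have h6 : (2:ℝ) * M ≤ 8 * M * (m' + 1) * (1 + 1 / c₁) := by
      nlinarith [mul_le_mul_of_nonneg_left h4 (show (0:ℝ) ≤ 8*M by positivity)]
    linarith
  · obtain ⟨v₀, hv₀mem, hv₀⟩ := hlb τ ξ₁ ξ₂ hsph
    set p : ℝ[X] := C τ + C ξ₁ * X ^ ℓ + C ξ₂ * X ^ m with hpdef
    have hp0 : p ≠ 0 := by
      intro h
      obtain ⟨h0, h1, h2⟩ := coeffs_poly ℓ m τ ξ₁ ξ₂ hℓ hm hne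
      rw [← hpdef, h] at h0 h1 h2
      simp at h0 h1 h2
      rw [← h0, ← h1, ← h2] at hsph
      norm_num at hsph
    set q : ℂ[X] := p.map (algebraMap ℝ ℂ) with hqdef
    have hq0 : q ≠ 0 := map_ne_zero hp0
    set R : Multiset ℂ := q.roots with hRdef
    have hsplits : Splits q := IsAlgClosed.splits q
    have hcardeq : R.card = q.natDegree := splits_iff_card_roots.mp hsplits
    have hdeg : q.natDegree ≤ m' := by
      rw [hqdef, natDegree_map]
      exact natDegree_poly_le ℓ m τ ξ₁ ξ₂
    have hcard : R.card ≤ m' := hcardeq.le.trans hdeg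
    have hfact : q = C q.leadingCoeff * (R.map fun a => X - C a).prod :=
      hsplits.eq_prod_roots
    set L : ℝ := Complex.abs q.leadingCoeff with hL
    have hLpos : 0 < L := by
      rw [hL]
      exact AbsoluteValue.pos _ (leadingCoeff_ne_zero.mpr hq0)
    have heval : ∀ v : ℝ, |τ + v ^ ℓ * ξ₁ + v ^ m * ξ₂|
        = L * (R.map fun r => Complex.abs ((v:ℂ) - r)).prod := by
      intro v
      have h1 : ((τ + v ^ ℓ * ξ₁ + v ^ m * ξ₂ : ℝ) : ℂ) = q.eval (v:ℂ) := by
        rw [← eval_poly ℓ m τ ξ₁ ξ₂ v, hqdef, ← hpdef]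
        have : ((v:ℝ):ℂ) = algebraMap ℝ ℂ v := rfl
        rw [this, eval_map, eval₂_at_apply]
        rfl
      calc |τ + v ^ ℓ * ξ₁ + v ^ m * ξ₂|
          = Complex.abs ((τ + v ^ ℓ * ξ₁ + v ^ m * ξ₂ : ℝ) : ℂ) := (Complex.abs_ofReal _).symm
        _ = Complex.abs (q.eval (v:ℂ)) := by rw [h1]
        _ = L * (R.map fun r => Complex.abs ((v:ℂ) - r)).prod := by
            conv_lhs => rw [hfact]
            rw [eval_mul, eval_C, map_mul, ← hL, eval_multiset_prod, Multiset.map_map,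
              map_multiset_prod, Multiset.map_map]
            congr 2
            ext r
            simp
    set t : ℝ := (δ / c₁) ^ ((m' : ℝ))⁻¹ with htdef
    have hdc0 : 0 < δ / c₁ := by positivity
    have ht0 : 0 < t := Real.rpow_pos_of_pos hdc0 _
    have hdclt : δ / c₁ < 1 / 2 ^ m' := by
      rw [div_lt_div_iff₀ hc₁ (by positivity)]
      have : δ < c₁ / 2 ^ m' := lt_of_lt_of_le hsmall hc₂le
      rw [lt_div_iff₀ (by positivity)] at this
      linarith
    have htlt : t < 1 / 2 := by
      have h1 : t < ((1:ℝ) / 2 ^ m') ^ ((m' : ℝ))⁻¹ :=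
        Real.rpow_lt_rpow hdc0.le hdclt (by positivity)
      have h2 : ((1:ℝ) / 2 ^ m') ^ ((m' : ℝ))⁻¹ = 1 / 2 := by
        rw [one_div, ← inv_pow, Real.pow_rpow_inv_natCast (x := (2:ℝ)⁻¹) (n := m')
          (by norm_num) (Nat.one_le_iff_ne_zero.mp hm'1)]
        norm_num
      rw [h2] at h1; exact h1
    set ρ : ℝ := 4 * M * t with hρdef
    have hρ0 : 0 < ρ := by positivity
    have hcover : ∀ v ∈ E, ∃ r ∈ R, Complex.abs ((v:ℂ) - r) < ρ := by
      intro v hv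
      by_contra hcon
      push_neg at hcon
      obtain ⟨hvI, hvδ⟩ := hv
      set θ : ℝ := ρ / (ρ + 2 * M) with hθdef
      have hθ0 : 0 < θ := by positivity
      have hθt : t < θ := by
        rw [hθdef, hρdef]
        exact arith_t_lt_theta M t hM ht0 htlt
      have key : ∀ r ∈ R, θ * Complex.abs ((v₀:ℂ) - r) ≤ Complex.abs ((v:ℂ) - r) := by
        intro r hr
        have htri : Complex.abs ((v₀:ℂ) - r) ≤ Complex.abs ((v:ℂ) - r) + 2 * M := by
          have h1 : Complex.abs ((v₀:ℂ) - r) ≤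
              Complex.abs ((v₀:ℂ) - (v:ℂ)) + Complex.abs ((v:ℂ) - r) :=
            Complex.abs.sub_le _ _ _
          have h2 : Complex.abs ((v₀:ℂ) - (v:ℂ)) = |v₀ - v| := by
            rw [← Complex.ofReal_sub, Complex.abs_ofReal]
          have h3 : |v₀ - v| ≤ 2 * M := by
            rw [abs_le]
            obtain ⟨ha, hb⟩ := hv₀mem
            obtain ⟨hc, hd⟩ := hvI
            constructor <;> linarith
          linarith
        have hge : ρ ≤ Complex.abs ((v:ℂ) - r) := hcon r hr
        rw [hθdef]
        exact arith_ratio_le M ρ _ _ hM hρ0 hge htri (AbsoluteValue.nonneg _ _)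
      have hprod : θ ^ R.card * (R.map fun r => Complex.abs ((v₀:ℂ) - r)).prod
          ≤ (R.map fun r => Complex.abs ((v:ℂ) - r)).prod := by
        have h1 : (R.map fun r => θ * Complex.abs ((v₀:ℂ) - r)).prod
            ≤ (R.map fun r => Complex.abs ((v:ℂ) - r)).prod := by
          apply Multiset.prod_map_le_prod_map₀
          · intro r hr; positivity
          · exact key
        calc θ ^ R.card * (R.map fun r => Complex.abs ((v₀:ℂ) - r)).prod
            = (R.map fun r => θ * Complex.abs ((v₀:ℂ) - r)).prod := by
              rw [Multiset.prod_map_mul]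
              congr 1
              rw [Multiset.map_const', Multiset.prod_replicate]
          _ ≤ _ := h1
      have hchain : θ ^ R.card * c₁ ≤ δ := by
        have hppos : (0:ℝ) ≤ θ ^ R.card := by positivity
        calc θ ^ R.card * c₁ ≤ θ ^ R.card * |τ + v₀ ^ ℓ * ξ₁ + v₀ ^ m * ξ₂| :=
              mul_le_mul_of_nonneg_left hv₀ hppos
          _ = L * (θ ^ R.card * (R.map fun r => Complex.abs ((v₀:ℂ) - r)).prod) := by
              rw [heval v₀]; ring
          _ ≤ L * (R.map fun r => Complex.abs ((v:ℂ) - r)).prod :=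
              mul_le_mul_of_nonneg_left hprod hLpos.le
          _ = |τ + v ^ ℓ * ξ₁ + v ^ m * ξ₂| := (heval v).symm
          _ ≤ δ := hvδ
      have hub : θ ^ R.card ≤ δ / c₁ := (le_div_iff₀ hc₁).mpr hchain
      have hfinal : δ / c₁ < θ ^ R.card := by
        rcases Nat.eq_zero_or_pos R.card with h0 | hpos
        · rw [h0, pow_zero]
          rw [div_lt_one hc₁]
          exact lt_of_lt_of_le hsmall hc₂c₁
        · calc δ / c₁ = t ^ m' := (Real.rpow_inv_natCast_pow (x := δ/c₁) (n := m') hdc0.le (Nat.one_le_iff_ne_zero.mp hm'1)).symm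
            _ ≤ t ^ R.card := pow_le_pow_of_le_one ht0.le (by linarith) hcard
            _ < θ ^ R.card := pow_lt_pow_left₀ hθt ht0.le (Nat.pos_iff_ne_zero.mp hpos)
      linarith
    have hEsub2 : E ⊆ ⋃ r ∈ R.toFinset, Set.Icc (r.re - ρ) (r.re + ρ) := by
      intro v hv
      obtain ⟨r, hrR, hrlt⟩ := hcover v hv
      refine Set.mem_biUnion (Multiset.mem_toFinset.mpr hrR) ?_
      have h1 : |v - r.re| ≤ Complex.abs ((v:ℂ) - r) := by
        have := Complex.abs_re_le_abs ((v:ℂ) - r)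
        simpa [Complex.sub_re, Complex.ofReal_re] using this
      rw [Set.mem_Icc]
      obtain ⟨ha, hb⟩ := abs_le.mp (h1.trans hrlt.le)
      constructor
      · linarith
      · linarith
    have hcardF : (R.toFinset.card : ℝ≥0∞) ≤ (m' : ℝ≥0∞) := by
      have : R.toFinset.card ≤ m' := (Multiset.toFinset_card_le R).trans hcard
      exact_mod_cast this
    calc volume E ≤ volume (⋃ r ∈ R.toFinset, Set.Icc (r.re - ρ) (r.re + ρ)) :=
          measure_mono hEsub2
      _ ≤ ∑ r ∈ R.toFinset, volume (Set.Icc (r.re - ρ) (r.re + ρ)) :=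
          measure_biUnion_finset_le _ _
      _ = ∑ r ∈ R.toFinset, ENNReal.ofReal (2 * ρ) := by
          apply Finset.sum_congr rfl
          intro r _
          rw [Real.volume_Icc]
          congr 1
          ring
      _ = (R.toFinset.card : ℝ≥0∞) * ENNReal.ofReal (2 * ρ) := by
          rw [Finset.sum_const, nsmul_eq_mul]
      _ ≤ (m' : ℝ≥0∞) * ENNReal.ofReal (2 * ρ) := mul_le_mul_left hcardF _
      _ = ENNReal.ofReal ((m' : ℝ) * (2 * ρ)) := by
          conv_rhs => rw [ENNReal.ofReal_mul (show (0:ℝ) ≤ (m':ℝ) by positivity)]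
          rw [ENNReal.ofReal_natCast]
      _ ≤ ENNReal.ofReal (Cc * δ ^ α) := by
          apply ENNReal.ofReal_le_ofReal
          -- final arithmetic
          have he0 : (0:ℝ) < ((m' : ℝ))⁻¹ := by positivity
          have he1 : ((m' : ℝ))⁻¹ ≤ 1 := inv_le_one_of_one_le₀ hm'R
          have hty : t ≤ δ ^ α * (1 + 1 / c₁) := by
            rw [htdef, Real.div_rpow hδ.le hc₁.le, div_eq_mul_inv, ← Real.inv_rpow hc₁.le,
              ← hαval]
            apply mul_le_mul_of_nonneg_left _ hδα0
            rw [hαval]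
            have h5 : (0:ℝ) < 1 / c₁ := by positivity
            rcases le_total (c₁⁻¹) 1 with h | h
            · calc (c₁⁻¹) ^ ((m':ℝ))⁻¹ ≤ 1 := Real.rpow_le_one (by positivity) h he0.le
                _ ≤ 1 + 1 / c₁ := by linarith
            · calc (c₁⁻¹) ^ ((m':ℝ))⁻¹ ≤ (c₁⁻¹) ^ (1:ℝ) :=
                  Real.rpow_le_rpow_of_exponent_le h he1
                _ = c₁⁻¹ := Real.rpow_one _
                _ ≤ 1 + 1 / c₁ := by rw [one_div]; linarith
          have hc₂inv : (1:ℝ) ≤ 1 / c₂ := by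
            rw [le_div_iff₀ hc₂, one_mul]; exact hc₂1
          have hmm : (m' : ℝ) ≤ (m' + 1) * (1 / c₂) := by nlinarith
          calc (m' : ℝ) * (2 * ρ) = 8 * M * (m' : ℝ) * t := by rw [hρdef]; ring
            _ ≤ 8 * M * (m' : ℝ) * (δ ^ α * (1 + 1 / c₁)) := by
                apply mul_le_mul_of_nonneg_left hty (by positivity)
            _ ≤ 8 * M * ((m' : ℝ) + 1) * (1 / c₂) * (1 + 1 / c₁) * δ ^ α := by
                have hpos1 : (0:ℝ) ≤ 8 * M := by positivity
                have hpos2 : (0:ℝ) ≤ δ ^ α * (1 + 1 / c₁) := by positivity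
                nlinarith [mul_le_mul_of_nonneg_left hmm hpos1,
                  mul_le_mul_of_nonneg_right
                    (mul_le_mul_of_nonneg_left hmm hpos1) hpos2]
            _ = Cc * δ ^ α := by rw [hCc]

/-- Non-degeneracy of order `α = min(1/ℓ, 1/m)` for the two-dimensional conservation law
with fluxes `ρ^{ℓ+1}/(ℓ+1)`, `ρ^{m+1}/(m+1)`, `ℓ ≠ m`. -/
theorem nondegeneracy_two_dim_flux (ℓ m : ℕ) (hℓ : 1 ≤ ℓ) (hm : 1 ≤ m) (hne : ℓ ≠ m)
    (M : ℝ) (hM : 0 < M) :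
    ∃ C : ℝ, 0 < C ∧ ∀ τ ξ₁ ξ₂ δ : ℝ, τ ^ 2 + ξ₁ ^ 2 + ξ₂ ^ 2 = 1 → 0 < δ → δ ≤ 1 →
      volume {v : ℝ | v ∈ Set.Icc (-M) M ∧ |τ + v ^ ℓ * ξ₁ + v ^ m * ξ₂| ≤ δ}
        ≤ ENNReal.ofReal (C * δ ^ (min (1 / (ℓ : ℝ)) (1 / (m : ℝ)))) := by
  obtain ⟨c₁, hc₁, hlb⟩ := exists_eval_lb ℓ m hℓ hm hne M hM
  exact nondeg_aux ℓ m hℓ hm hne M hM c₁ hc₁ hlb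
end
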